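/- Let G be a finite group, (H1,H2,H3,H4) an Ingleton offender in G (i.e., the Ingleton inequality fails), and N a normal subgroup of G with N ≤ H1 ∩ H2 ∩ H3 ∩ H4. Then the images (H1/N, H2/N, H3/N, H4/N) form an Ingleton offender in G/N. -/

import Mathlib

private lemma card_map_quot {G : Type*} [Group G] [Finite G] {N K : Subgroup G}
    [N.Normal] (h : N ≤ K) :
    Nat.card (K.map (QuotientGroup.mk' N)) * Nat.card N = Nat.card K := by
  have h1 : N.relIndex K = Nat.card (K.map (QuotientGroup.mk' N)) := by
    rw [← Subgroup.relIndex_ker (QuotientGroup.mk' N) (K := K), QuotientGroup.ker_mk']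
  have h2 : Nat.card (N.subgroupOf K) = Nat.card N :=
    Nat.card_congr (Subgroup.subgroupOfEquivOfLe h).toEquiv
  have := (N.subgroupOf K).index_mul_card
  rw [h2] at this
  rw [← h1]
  exact this

private lemma map_inf_of_le {G : Type*} [Group G] {N A B : Subgroup G} [N.Normal]
    (h : N ≤ A) :
    (A ⊓ B).map (QuotientGroup.mk' N) = A.map (QuotientGroup.mk' N) ⊓ B.map (QuotientGroup.mk' N) := by
  refine le_antisymm (Subgroup.map_inf_le _ _ _) ?_
  rintro x ⟨⟨a, ha, rfl⟩, ⟨b, hb, hab⟩⟩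
  have : b * a⁻¹ ∈ N := by
    rw [← QuotientGroup.ker_mk' N]
    simp only [MonoidHom.mem_ker, map_mul, map_inv, hab, mul_inv_cancel]
  have hbA : b ∈ A := by
    have := h this
    have := mul_mem this (ha : a ∈ A)
    simpa using this
  exact ⟨b, ⟨hbA, hb⟩, hab⟩

theorem stmt15 {G : Type*} [Group G] [Finite G] (H1 H2 H3 H4 N : Subgroup G)
    [N.Normal] (hN : N ≤ H1 ⊓ H2 ⊓ H3 ⊓ H4)
    (hoff : Nat.card (H1 : Subgroup G) * Nat.card (H2 : Subgroup G) * Nat.card (H3 ⊓ H4 : Subgroup G) * Nat.card (H1 ⊓ H2 ⊓ H3 : Subgroup G) * Nat.card (H1 ⊓ H2 ⊓ H4 : Subgroup G) < Nat.card (H1 ⊓ H2 : Subgroup G) * Nat.card (H1 ⊓ H3 : Subgroup G) * Nat.card (H1 ⊓ H4 : Subgroup G) * Nat.card (H2 ⊓ H3 : Subgroup G) * Nat.card (H2 ⊓ H4 : Subgroup G)) :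
    Nat.card ((H1.map (QuotientGroup.mk' N)) : Subgroup (G ⧸ N)) * Nat.card ((H2.map (QuotientGroup.mk' N)) : Subgroup (G ⧸ N)) * Nat.card ((H3.map (QuotientGroup.mk' N)) ⊓ (H4.map (QuotientGroup.mk' N)) : Subgroup (G ⧸ N)) * Nat.card ((H1.map (QuotientGroup.mk' N)) ⊓ (H2.map (QuotientGroup.mk' N)) ⊓ (H3.map (QuotientGroup.mk' N)) : Subgroup (G ⧸ N)) * Nat.card ((H1.map (QuotientGroup.mk' N)) ⊓ (H2.map (QuotientGroup.mk' N)) ⊓ (H4.map (QuotientGroup.mk' N)) : Subgroup (G ⧸ N)) < Nat.card ((H1.map (QuotientGroup.mk' N)) ⊓ (H2.map (QuotientGroup.mk' N)) : Subgroup (G ⧸ N)) * Nat.card ((H1.map (QuotientGroup.mk' N)) ⊓ (H3.map (QuotientGroup.mk' N)) : Subgroup (G ⧸ N)) * Nat.card ((H1.map (QuotientGroup.mk' N)) ⊓ (H4.map (QuotientGroup.mk' N)) : Subgroup (G ⧸ N)) * Nat.card ((H2.map (QuotientGroup.mk' N)) ⊓ (H3.map (QuotientGroup.mk' N)) : Subgroup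 (G ⧸ N)) * Nat.card ((H2.map (QuotientGroup.mk' N)) ⊓ (H4.map (QuotientGroup.mk' N)) : Subgroup (G ⧸ N)) := by
  have h1 : N ≤ H1 := le_trans hN (le_trans inf_le_left (le_trans inf_le_left inf_le_left))
  have h2 : N ≤ H2 := le_trans hN (le_trans inf_le_left (le_trans inf_le_left inf_le_right))
  have h3 : N ≤ H3 := le_trans hN (le_trans inf_le_left inf_le_right)
  have h4 : N ≤ H4 := le_trans hN inf_le_right
  rw [← map_inf_of_le h3 (B := H4), ← map_inf_of_le h1 (B := H2),
    ← map_inf_of_le h1 (B := H3), ← map_inf_of_le h1 (B := H4),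
    ← map_inf_of_le h2 (B := H3), ← map_inf_of_le h2 (B := H4),
    ← map_inf_of_le (le_inf h1 h2) (B := H3), ← map_inf_of_le (le_inf h1 h2) (B := H4)]
  set n := Nat.card N with hn
  have hnpos : 0 < n := Nat.card_pos
  have key : ∀ K : Subgroup G, N ≤ K →
      Nat.card (K.map (QuotientGroup.mk' N)) * n = Nat.card K := fun K h => card_map_quot h
  refine Nat.lt_of_mul_lt_mul_right (a := n^5) ?_
  have eL : (Nat.card (H1.map (QuotientGroup.mk' N)) * Nat.card (H2.map (QuotientGroup.mk' N)) *
      Nat.card ((H3 ⊓ H4).map (QuotientGroup.mk' N)) *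
      Nat.card ((H1 ⊓ H2 ⊓ H3).map (QuotientGroup.mk' N)) *
      Nat.card ((H1 ⊓ H2 ⊓ H4).map (QuotientGroup.mk' N))) * n^5 =
      Nat.card H1 * Nat.card H2 * Nat.card (H3 ⊓ H4 : Subgroup G) *
      Nat.card (H1 ⊓ H2 ⊓ H3 : Subgroup G) * Nat.card (H1 ⊓ H2 ⊓ H4 : Subgroup G) := by
    rw [← key H1 h1, ← key H2 h2, ← key (H3 ⊓ H4) (le_inf h3 h4),
      ← key (H1 ⊓ H2 ⊓ H3) (le_inf (le_inf h1 h2) h3),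
      ← key (H1 ⊓ H2 ⊓ H4) (le_inf (le_inf h1 h2) h4)]
    ring
  have eR : (Nat.card ((H1 ⊓ H2).map (QuotientGroup.mk' N)) *
      Nat.card ((H1 ⊓ H3).map (QuotientGroup.mk' N)) *
      Nat.card ((H1 ⊓ H4).map (QuotientGroup.mk' N)) *
      Nat.card ((H2 ⊓ H3).map (QuotientGroup.mk' N)) *
      Nat.card ((H2 ⊓ H4).map (QuotientGroup.mk' N))) * n^5 =
      Nat.card (H1 ⊓ H2 : Subgroup G) * Nat.card (H1 ⊓ H3 : Subgroup G) *
      Nat.card (H1 ⊓ H4 : Subgroup G) * Nat.card (H2 ⊓ H3 : Subgroup G) *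
      Nat.card (H2 ⊓ H4 : Subgroup G) := by
    rw [← key (H1 ⊓ H2) (le_inf h1 h2), ← key (H1 ⊓ H3) (le_inf h1 h3),
      ← key (H1 ⊓ H4) (le_inf h1 h4), ← key (H2 ⊓ H3) (le_inf h2 h3),
      ← key (H2 ⊓ H4) (le_inf h2 h4)]
    ring
  rw [eL, eR]
  exact hoff
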